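/- Bauer–Fike theorem (localization part): Let A be an n×n complex matrix with A = P D P⁻¹ where P is invertible and D is diagonal, and let H be any n×n complex matrix. Set ε = ‖P‖·‖P⁻¹‖·‖H‖ (operator norm). Then every eigenvalue μ of A + H satisfies |μ − λ| ≤ ε for some eigenvalue λ of A. -/

import Mathlib

open Matrix

/-- Operator norm of a complex matrix induced by the Euclidean norm. -/
noncomputable def opNorm {n : ℕ} (A : Matrix (Fin n) (Fin n) ℂ) : ℝ :=
  ‖Matrix.toEuclideanCLM (𝕜 := ℂ) A‖

lemma opNorm_nonneg' {n : ℕ} (A : Matrix (Fin n) (Fin n) ℂ) : 0 ≤ opNorm A :=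
  norm_nonneg _

lemma opNorm_mul_le {n : ℕ} (A B : Matrix (Fin n) (Fin n) ℂ) :
    opNorm (A * B) ≤ opNorm A * opNorm B := by
  unfold opNorm
  rw [show Matrix.toEuclideanCLM (𝕜 := ℂ) (A * B) =
    Matrix.toEuclideanCLM (𝕜 := ℂ) A * Matrix.toEuclideanCLM (𝕜 := ℂ) B from map_mul _ A B]
  exact ContinuousLinearMap.opNorm_comp_le _ _

lemma opNorm_diagonal_le {n : ℕ} (v : Fin n → ℂ) (M : ℝ) (hM : 0 ≤ M)
    (h : ∀ i, ‖v i‖ ≤ M) : opNorm (Matrix.diagonal v) ≤ M := by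
  refine ContinuousLinearMap.opNorm_le_bound _ hM fun x => ?_
  have hx : ∀ i, (Matrix.toEuclideanCLM (𝕜 := ℂ) (Matrix.diagonal v) x) i = v i * x i := by
    intro i
    have h2 : (WithLp.equiv 2 (Fin n → ℂ)) (Matrix.toEuclideanCLM (𝕜 := ℂ)
        (Matrix.diagonal v) x) i = Matrix.mulVec (Matrix.diagonal v) ((WithLp.equiv 2 _) x) i := by
      exact congrFun (Matrix.ofLp_toEuclideanCLM (𝕜 := ℂ) (Matrix.diagonal v) x) i
    simpa [Matrix.mulVec_diagonal] using h2
  rw [EuclideanSpace.norm_eq, EuclideanSpace.norm_eq]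
  calc √(∑ i, ‖(Matrix.toEuclideanCLM (𝕜 := ℂ) (Matrix.diagonal v) x) i‖ ^ 2)
      ≤ √(∑ i, M ^ 2 * ‖x i‖ ^ 2) := by
        apply Real.sqrt_le_sqrt
        apply Finset.sum_le_sum
        intro i _
        rw [hx i, norm_mul, mul_pow]
        exact mul_le_mul_of_nonneg_right (pow_le_pow_left₀ (norm_nonneg _) (h i) 2)
          (by positivity)
    _ = M * √(∑ i, ‖x i‖ ^ 2) := by
        rw [← Finset.mul_sum, Real.sqrt_mul (by positivity), Real.sqrt_sq hM]

/-- Bauer–Fike theorem, localization part. -/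
theorem bauer_fike_localization {n : ℕ} (A D H P : Matrix (Fin n) (Fin n) ℂ)
    (d : Fin n → ℂ) (hP : IsUnit P) (hD : D = Matrix.diagonal d)
    (hA : A = P * D * P⁻¹)
    (ε : ℝ) (hε : ε = opNorm P * opNorm P⁻¹ * opNorm H)
    (μ : ℂ) (hμ : μ ∈ spectrum ℂ (A + H)) :
    ∃ i, ‖μ - d i‖ ≤ ε := by
  rcases Nat.eq_zero_or_pos n with hn | hn
  · subst hn
    exfalso
    rw [spectrum.mem_iff] at hμ
    exact hμ (by
      have : (algebraMap ℂ (Matrix (Fin 0) (Fin 0) ℂ) μ - (A + H)) = 1 := Subsingleton.elim _ _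
      rw [this]; exact isUnit_one)
  by_contra hcon
  push_neg at hcon
  have hε0 : 0 ≤ ε := by
    rw [hε]
    exact mul_nonneg (mul_nonneg (opNorm_nonneg' _) (opNorm_nonneg' _)) (opNorm_nonneg' _)
  set c : Fin n → ℂ := fun i => μ - d i with hc
  have hc0 : ∀ i, c i ≠ 0 := by
    intro i h
    have h1 : (0:ℝ) < ‖c i‖ := lt_of_le_of_lt hε0 (hcon i)
    rw [h] at h1
    simp at h1
  have hdet : IsUnit P.det := (Matrix.isUnit_iff_isUnit_det P).mp hP
  have hPP : P * P⁻¹ = 1 := Matrix.mul_nonsing_inv P hdet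
  have hPP' : P⁻¹ * P = 1 := Matrix.nonsing_inv_mul P hdet
  have hDc : Matrix.diagonal c * Matrix.diagonal c⁻¹ = 1 := by
    rw [Matrix.diagonal_mul_diagonal,
      show (fun i => c i * c⁻¹ i) = fun _ : Fin n => (1:ℂ) from funext fun i => by
        rw [Pi.inv_apply]; exact mul_inv_cancel₀ (hc0 i), Matrix.diagonal_one]
  set B : Matrix (Fin n) (Fin n) ℂ := Matrix.diagonal c⁻¹ * (P⁻¹ * H * P) with hB
  have e1 : Matrix.diagonal c * B = P⁻¹ * H * P := by
    rw [hB, ← mul_assoc, hDc, one_mul]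
  have e3 : P * (P⁻¹ * H * P) * P⁻¹ = H := by
    calc P * (P⁻¹ * H * P) * P⁻¹ = (P * P⁻¹) * H * (P * P⁻¹) := by noncomm_ring
    _ = H := by rw [hPP, one_mul, mul_one]
  have e4 : P * Matrix.diagonal c * P⁻¹ = μ • 1 - A := by
    have hcd : Matrix.diagonal c = μ • (1 : Matrix (Fin n) (Fin n) ℂ) - Matrix.diagonal d := by
      rw [Matrix.smul_one_eq_diagonal, ← Matrix.diagonal_sub]
    rw [hcd, Matrix.mul_sub, Matrix.sub_mul, hA, hD]
    congr 1
    rw [mul_smul_comm, mul_one, Matrix.smul_mul, hPP]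
  have hfact : algebraMap ℂ (Matrix (Fin n) (Fin n) ℂ) μ - (A + H)
      = P * (Matrix.diagonal c * (1 - B)) * P⁻¹ := by
    rw [mul_sub, mul_one, e1, Matrix.mul_sub, Matrix.sub_mul, e3, e4,
      Algebra.algebraMap_eq_smul_one]
    noncomm_ring
  rw [spectrum.mem_iff, hfact] at hμ
  have hDcUnit : IsUnit (Matrix.diagonal c) := by
    rw [Matrix.isUnit_iff_isUnit_det, Matrix.det_diagonal, isUnit_iff_ne_zero]
    exact Finset.prod_ne_zero_iff.mpr fun i _ => hc0 i
  have hPinvUnit : IsUnit (P⁻¹) := by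
    rw [Matrix.isUnit_iff_isUnit_det, Matrix.det_nonsing_inv, isUnit_ringInverse]
    exact hdet
  have hNB : ¬ IsUnit (1 - B) := by
    intro hu
    exact hμ ((hP.mul (hDcUnit.mul hu)).mul hPinvUnit)
  have h1B : (1 : ℂ) ∈ spectrum ℂ B := by
    rw [spectrum.mem_iff, _root_.map_one]
    exact hNB
  have h1B' : (1 : ℂ) ∈ spectrum ℂ (Matrix.toEuclideanCLM (𝕜 := ℂ) B) := by
    rwa [AlgEquiv.spectrum_eq]
  haveI : Nonempty (Fin n) := Fin.pos_iff_nonempty.mp hn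
  haveI : Nontrivial (EuclideanSpace ℂ (Fin n)) := by
    refine ⟨⟨0, WithLp.toLp 2 (fun _ => 1), fun h => ?_⟩⟩
    have := congrFun (congrArg (WithLp.equiv 2 (Fin n → ℂ)) h) (Classical.arbitrary _)
    simpa using this
  have hnorm1 : (1:ℝ) ≤ opNorm B := by
    have := spectrum.norm_le_norm_of_mem h1B'
    simpa [opNorm] using this
  -- minimizer
  obtain ⟨i₀, -, hmin⟩ := Finset.exists_min_image Finset.univ (fun i => ‖c i‖)
    ⟨Classical.arbitrary _, Finset.mem_univ _⟩
  have hm0 : 0 < ‖c i₀‖ := norm_pos_iff.mpr (hc0 i₀)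
  have hdiag : opNorm (Matrix.diagonal c⁻¹) ≤ ‖c i₀‖⁻¹ := by
    apply opNorm_diagonal_le _ _ (by positivity)
    intro i
    rw [Pi.inv_apply, norm_inv]
    exact inv_anti₀ hm0 (hmin i (Finset.mem_univ i))
  have hBle : opNorm B ≤ ‖c i₀‖⁻¹ * (opNorm P⁻¹ * opNorm H * opNorm P) := by
    calc opNorm B ≤ opNorm (Matrix.diagonal c⁻¹) * opNorm (P⁻¹ * H * P) :=
        opNorm_mul_le _ _
      _ ≤ opNorm (Matrix.diagonal c⁻¹) * (opNorm (P⁻¹ * H) * opNorm P) := by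
          apply mul_le_mul_of_nonneg_left (opNorm_mul_le _ _) (opNorm_nonneg' _)
      _ ≤ opNorm (Matrix.diagonal c⁻¹) * ((opNorm P⁻¹ * opNorm H) * opNorm P) := by
          apply mul_le_mul_of_nonneg_left
            (mul_le_mul_of_nonneg_right (opNorm_mul_le _ _) (opNorm_nonneg' _))
            (opNorm_nonneg' _)
      _ ≤ ‖c i₀‖⁻¹ * (opNorm P⁻¹ * opNorm H * opNorm P) := by
          exact mul_le_mul_of_nonneg_right hdiag
            (mul_nonneg (mul_nonneg (opNorm_nonneg' _) (opNorm_nonneg' _)) (opNorm_nonneg' _))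
  have hfin : ‖c i₀‖ ≤ ε := by
    have h2 : (1:ℝ) ≤ ‖c i₀‖⁻¹ * (opNorm P⁻¹ * opNorm H * opNorm P) := hnorm1.trans hBle
    have h3 : ‖c i₀‖ ≤ opNorm P⁻¹ * opNorm H * opNorm P := by
      rw [← inv_mul_le_iff₀ (inv_pos.mpr hm0)] at h2
      simpa [inv_inv] using h2
    calc ‖c i₀‖ ≤ opNorm P⁻¹ * opNorm H * opNorm P := h3
      _ = ε := by rw [hε]; ring
  exact absurd hfin (not_le.mpr (hcon i₀))
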